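/- For the quadratic system ẋ = 2(1 + 2x − 2ax² + 6xy), ẏ = 8 − 3a − 14ax − 2axy − 8y², the quartic curve f(x,y) = 1/4 + x − x² + ax³ + xy + x²y² = 0 is invariant with cofactor k(x,y) = 4(2 − 3ax + 2y); that is, P·f_x + Q·f_y = k·f identically. -/

import Mathlib

/-- For the quadratic system `ẋ = 2(1 + 2x − 2ax² + 6xy)`,
`ẏ = 8 − 3a − 14ax − 2axy − 8y²`, the quartic
`f(x,y) = 1/4 + x − x² + ax³ + xy + x²y²` defines an invariant algebraic curve with
cofactor `k(x,y) = 4(2 − 3ax + 2y)`. -/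
theorem stmt_10 (a : ℝ)
    (P Q f k : ℝ × ℝ → ℝ)
    (hP : ∀ p : ℝ × ℝ, P p = 2 * (1 + 2 * p.1 - 2 * a * p.1 ^ 2 + 6 * p.1 * p.2))
    (hQ : ∀ p : ℝ × ℝ, Q p = 8 - 3 * a - 14 * a * p.1 - 2 * a * p.1 * p.2
      - 8 * p.2 ^ 2)
    (hf : ∀ p : ℝ × ℝ, f p = 1 / 4 + p.1 - p.1 ^ 2 + a * p.1 ^ 3 + p.1 * p.2
      + p.1 ^ 2 * p.2 ^ 2)
    (hk : ∀ p : ℝ × ℝ, k p = 4 * (2 - 3 * a * p.1 + 2 * p.2)) :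
    ∀ p : ℝ × ℝ, P p * fderiv ℝ f p (1, 0) + Q p * fderiv ℝ f p (0, 1)
      = k p * f p := by
  have hfe : f = fun p : ℝ × ℝ => 1 / 4 + p.1 - p.1 ^ 2 + a * p.1 ^ 3 + p.1 * p.2
      + p.1 ^ 2 * p.2 ^ 2 := funext hf
  subst hfe
  intro p
  have hrw : (fun p : ℝ × ℝ => 1 / 4 + p.1 - p.1 ^ 2 + a * p.1 ^ 3 + p.1 * p.2
      + p.1 ^ 2 * p.2 ^ 2)
      = fun p : ℝ × ℝ => 1 / 4 + p.1 - p.1 * p.1 + a * (p.1 * p.1 * p.1) + p.1 * p.2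
      + p.1 * p.1 * (p.2 * p.2) := by
    funext q; ring
  rw [hrw]
  have hx : HasFDerivAt (fun q : ℝ × ℝ => q.1) (ContinuousLinearMap.fst ℝ ℝ ℝ) p :=
    hasFDerivAt_fst
  have hy : HasFDerivAt (fun q : ℝ × ℝ => q.2) (ContinuousLinearMap.snd ℝ ℝ ℝ) p :=
    hasFDerivAt_snd
  have H := (((((hasFDerivAt_const (1 / 4 : ℝ) p).add hx).sub (hx.mul hx)).add
    (((hx.mul hx).mul hx).const_mul a)).add (hx.mul hy)).add ((hx.mul hx).mul (hy.mul hy))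
  rw [show fderiv ℝ (fun p : ℝ × ℝ => 1 / 4 + p.1 - p.1 * p.1 + a * (p.1 * p.1 * p.1) + p.1 * p.2
      + p.1 * p.1 * (p.2 * p.2)) p = _ from H.fderiv, hP, hQ, hk]
  simp
  ring
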